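/- arXiv:2207.12128 — 5 statements merged into one kernel-verified Lean document; each statement's English description precedes it below -/
import Mathlib

section
/- Let G be a broken wheel with principal path P = p p' p'' and let L be a list-assignment for G with |L(v)| ≥ 3 for every vertex v ∈ V(G) \ {p, p'}. Let φ₀ and φ₁ be two distinct L-colorings of the edge pp', and for i = 0, 1 set Sᵢ := Λ_G(φᵢ(p), φᵢ(p'), •); suppose |S₀| = |S₁| = 1. If φ₀(p) = φ₁(p) and S₀ = S₁, then the path G − p' has an even number of edges. -/
/-- Vertex type of a broken wheel whose hub-deleted path `p u₁ … u_t p''` has `t + 2`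
vertices: `some i` is the `i`-th path vertex (so `some 0 = p` and
`some (Fin.last (t+1)) = p''`), and `none` is the hub `p'`. -/
abbrev BWVert (t : ℕ) := Option (Fin (t + 2))

/-- Adjacency in the broken wheel: the hub `p'` is adjacent to every path vertex, and
two path vertices are adjacent exactly when they are consecutive. -/
def bwAdj (t : ℕ) : BWVert t → BWVert t → Prop
  | none, none => False
  | none, some _ => True
  | some _, none => True
  | some i, some j => i.val + 1 = j.val ∨ j.val + 1 = i.val

/-- An `L`-coloring of (all of) the broken wheel. -/
def IsBWColoring (t : ℕ) (L : BWVert t → Finset ℕ) (c : BWVert t → ℕ) : Prop :=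
  (∀ v, c v ∈ L v) ∧ ∀ v w, bwAdj t v w → c v ≠ c w

/-- `Λ_G(a, b, •)`: the set of colors `x` such that some `L`-coloring of the broken wheel
uses `a, b, x` on `p, p', p''` respectively. -/
def Lambda (t : ℕ) (L : BWVert t → Finset ℕ) (a b : ℕ) : Set ℕ :=
  {x | ∃ c : BWVert t → ℕ, IsBWColoring t L c ∧
    c (some 0) = a ∧ c none = b ∧ c (some (Fin.last (t + 1))) = x}

namespace BWAux

/-- Reachable colors along a path with color-lists `M i`, starting from `a` at index 0. -/
def Reach (M : ℕ → Finset ℕ) (a : ℕ) : ℕ → Finset ℕ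
  | 0 => {a}
  | i+1 => (M (i+1)).filter (fun x => ∃ y ∈ Reach M a i, y ≠ x)

lemma mem_reach_iff (M : ℕ → Finset ℕ) (a : ℕ) (n : ℕ) (x : ℕ) :
    x ∈ Reach M a n ↔ ∃ g : ℕ → ℕ, g 0 = a ∧ g n = x ∧
      (∀ i, 1 ≤ i → i ≤ n → g i ∈ M i) ∧ (∀ i, i < n → g i ≠ g (i+1)) := by
  induction n generalizing x with
  | zero =>
    simp only [Reach, Finset.mem_singleton]
    constructor
    · intro hx
      exact ⟨fun _ => a, rfl, hx.symm, fun i h1 h2 => by omega, fun i h => by omega⟩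
    · rintro ⟨g, h0, hn, -, -⟩; rw [← hn, h0]
  | succ n ih =>
    simp only [Reach, Finset.mem_filter]
    constructor
    · rintro ⟨hxM, y, hy, hyx⟩
      obtain ⟨g, h0, hn, hmem, hedge⟩ := ih y |>.1 hy
      refine ⟨Function.update g (n+1) x, ?_, ?_, ?_, ?_⟩
      · rw [Function.update_of_ne (by omega)]; exact h0
      · rw [Function.update_self]
      · intro i h1 h2
        rcases Nat.lt_or_ge i (n+1) with h | h
        · rw [Function.update_of_ne (by omega)]; exact hmem i h1 (by omega)
        · have : i = n + 1 := by omega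
          subst this; rw [Function.update_self]; exact hxM
      · intro i hi
        rcases Nat.lt_or_ge i n with h | h
        · rw [Function.update_of_ne (by omega), Function.update_of_ne (by omega)]
          exact hedge i h
        · have : i = n := by omega
          subst this
          rw [Function.update_of_ne (by omega), Function.update_self, hn]
          exact hyx
    · rintro ⟨g, h0, hn, hmem, hedge⟩
      refine ⟨hn ▸ hmem (n+1) (by omega) le_rfl, g n, ?_, ?_⟩
      · exact (ih (g n)).2 ⟨g, h0, rfl, fun i h1 h2 => hmem i h1 (by omega),
          fun i hi => hedge i (by omega)⟩
      · rw [← hn]; exact hedge n (by omega)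

lemma reach_empty (M : ℕ → Finset ℕ) (a : ℕ) {i : ℕ} (h : Reach M a i = ∅) :
    ∀ j, i ≤ j → Reach M a j = ∅ := by
  intro j hj
  induction j, hj using Nat.le_induction with
  | base => exact h
  | succ j hj ih => simp [Reach, ih]

lemma reach_big (M : ℕ → Finset ℕ) (a : ℕ) {i : ℕ} (h : 2 ≤ (Reach M a i).card)
    (n : ℕ) (hM : ∀ j, 1 ≤ j → j ≤ n → 2 ≤ (M j).card) :
    ∀ j, i ≤ j → j ≤ n → 2 ≤ (Reach M a j).card := by
  intro j hj
  induction j, hj using Nat.le_induction with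
  | base => exact fun _ => h
  | succ j hj ih =>
    intro hjn
    have h2 : 2 ≤ (Reach M a j).card := ih (by omega)
    have : Reach M a (j+1) = M (j+1) := by
      apply Finset.Subset.antisymm
      · exact Finset.filter_subset _ _
      · intro x hx
        simp only [Reach, Finset.mem_filter]
        exact ⟨hx, Finset.exists_mem_ne (by omega) x⟩
    rw [this]; exact hM (j+1) (by omega) hjn

lemma reach_singletons (M : ℕ → Finset ℕ) (a : ℕ) (n : ℕ)
    (hM : ∀ j, 1 ≤ j → j ≤ n → 2 ≤ (M j).card)
    (h1 : (Reach M a n).card = 1) :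
    ∀ i, i ≤ n → (Reach M a i).card = 1 := by
  intro i hi
  rcases Nat.lt_or_ge (Reach M a i).card 1 with h | h
  · exfalso
    have : Reach M a i = ∅ := Finset.card_eq_zero.1 (by omega)
    have := reach_empty M a this n hi
    rw [this] at h1; simp at h1
  rcases Nat.lt_or_ge (Reach M a i).card 2 with h2 | h2
  · omega
  · exfalso
    have := reach_big M a h2 n hM n hi le_rfl
    omega

lemma erase_erase_singleton {S : Finset ℕ} {b c z : ℕ} (h3 : 3 ≤ S.card)
    (h : (S.erase b).erase c = {z}) :
    S.erase b = {c, z} ∧ c ≠ z ∧ b ∈ S ∧ S.card = 3 := by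
  have hb : b ∈ S := by
    by_contra hb
    rw [Finset.erase_eq_of_notMem hb] at h
    have := Finset.card_erase_le (a := c) (s := S)
    have h1 : ((S.erase c)).card = 1 := by rw [h]; simp
    have := Finset.card_erase_le (a := c) (s := S)
    have := Finset.pred_card_le_card_erase (a := c) (s := S)
    omega
  have hcard_eb : (S.erase b).card = S.card - 1 := Finset.card_erase_of_mem hb
  have h1 : ((S.erase b).erase c).card = 1 := by rw [h]; simp
  have hc : c ∈ S.erase b := by
    by_contra hc
    rw [Finset.erase_eq_of_notMem hc] at h1
    omega
  have hcard : (S.erase b).card = 2 := by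
    have := Finset.card_erase_of_mem hc
    omega
  have hins : S.erase b = insert c ((S.erase b).erase c) := (Finset.insert_erase hc).symm
  rw [h] at hins
  have hz : z ∈ (S.erase b).erase c := by rw [h]; simp
  have hcz : z ≠ c := (Finset.mem_erase.1 hz).1
  exact ⟨hins, hcz.symm, hb, by omega⟩


/-- The list of the `i`-th path vertex, hub color `b` removed (index capped at `t+1`). -/
def pathM (t : ℕ) (L : BWVert t → Finset ℕ) (b : ℕ) (i : ℕ) : Finset ℕ :=
  (L (some ⟨min i (t+1), by omega⟩)).erase b

lemma pathM_eq (t : ℕ) (L : BWVert t → Finset ℕ) (b : ℕ) (i : ℕ) (h : i ≤ t + 1) :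
    pathM t L b i = (L (some ⟨i, by omega⟩)).erase b := by
  simp [pathM, Nat.min_eq_left h]

lemma lambda_eq (t : ℕ) (L : BWVert t → Finset ℕ) (a b : ℕ)
    (ha : a ∈ L (some 0)) (hb : b ∈ L none) (hab : a ≠ b) :
    Lambda t L a b = ↑(Reach (pathM t L b) a (t + 1)) := by
  have ezero : (⟨0, by omega⟩ : Fin (t + 2)) = 0 := by ext; simp
  have elast : (⟨t + 1, by omega⟩ : Fin (t + 2)) = Fin.last (t + 1) := by ext; simp [Fin.last]
  have hidxe : ∀ (i : ℕ) (h : i ≤ t + 1),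
      (⟨min i (t+1), by omega⟩ : Fin (t + 2)) = ⟨i, by omega⟩ := by
    intro i h; ext; simpa using by omega
  ext x
  simp only [Lambda, Set.mem_setOf_eq, Finset.mem_coe, mem_reach_iff]
  constructor
  · rintro ⟨c, ⟨hmem, hadj⟩, h0, hnone, hlast⟩
    refine ⟨fun i => c (some ⟨min i (t+1), by omega⟩), ?_, ?_, ?_, ?_⟩
    · show c (some ⟨min 0 (t+1), by omega⟩) = a
      rw [hidxe 0 (by omega), ezero]; exact h0
    · show c (some ⟨min (t+1) (t+1), by omega⟩) = x
      rw [hidxe (t+1) le_rfl, elast]; exact hlast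
    · intro i h1 h2
      rw [pathM_eq t L b i h2]
      show c (some ⟨min i (t+1), by omega⟩) ∈ _
      rw [hidxe i h2]
      refine Finset.mem_erase.2 ⟨?_, hmem _⟩
      have := hadj (some ⟨i, by omega⟩) none trivial
      rwa [hnone] at this
    · intro i hi
      show c (some ⟨min i (t+1), by omega⟩) ≠ c (some ⟨min (i+1) (t+1), by omega⟩)
      rw [hidxe i (by omega), hidxe (i+1) (by omega)]
      exact hadj (some ⟨i, by omega⟩) (some ⟨i+1, by omega⟩) (Or.inl rfl)
  · rintro ⟨g, h0, hn, hmem, hedge⟩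
    have hmem' : ∀ i : Fin (t + 2), g i.val ∈ L (some i) ∧ (1 ≤ i.val → g i.val ≠ b) := by
      intro i
      rcases Nat.eq_zero_or_pos i.val with h | h
      · have : i = 0 := by ext; simp [h]
        subst this
        simp only [Fin.val_zero, h0]
        exact ⟨ha, by omega⟩
      · have hle : i.val ≤ t + 1 := by omega
        have hm := hmem i.val h hle
        rw [pathM_eq t L b i.val hle] at hm
        rw [show (⟨i.val, by omega⟩ : Fin (t+2)) = i from by ext; simp] at hm
        exact ⟨Finset.mem_of_mem_erase hm, fun _ => (Finset.mem_erase.1 hm).1⟩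
    have hnb : ∀ i : Fin (t + 2), g i.val ≠ b := by
      intro i
      rcases Nat.eq_zero_or_pos i.val with h | h
      · have : i = 0 := by ext; simp [h]
        subst this
        simp only [Fin.val_zero, h0]; exact hab
      · exact (hmem' i).2 h
    refine ⟨fun v => v.elim b (fun i => g i.val), ⟨?_, ?_⟩, ?_, rfl, ?_⟩
    · intro v
      match v with
      | none => exact hb
      | some i => exact (hmem' i).1
    · intro v w hvw
      match v, w with
      | none, none => exact absurd hvw id
      | none, some i => exact (hnb i).symm
      | some i, none => exact hnb i
      | some i, some j =>
        show g i.val ≠ g j.val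
        rcases hvw with h | h
        · have hlt : i.val < t + 1 := by omega
          have := hedge i.val hlt
          rwa [h] at this
        · have hlt : j.val < t + 1 := by omega
          have := hedge j.val hlt
          rw [h] at this
          exact this.symm
    · show g (0 : Fin (t+2)).val = a
      simp only [Fin.val_zero]; exact h0
    · show g (Fin.last (t+1)).val = x
      simp only [Fin.val_last]; exact hn


end BWAux

open BWAux

/-- Theorem 2.4(1)(A): if `φ₀, φ₁` are distinct `L`-colorings of the edge `pp'` with
`|S₀| = |S₁| = 1`, `φ₀(p) = φ₁(p)` and `S₀ = S₁`, then the path `G - p'` (which has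
`t + 1` edges) has an even number of edges. -/
theorem bwheel_same_p_same_S_even (t : ℕ) (L : BWVert t → Finset ℕ)
    (hL : ∀ v : BWVert t, v ≠ some 0 → v ≠ none → 3 ≤ (L v).card)
    (a₀ b₀ a₁ b₁ : ℕ)
    (ha₀ : a₀ ∈ L (some 0)) (hb₀ : b₀ ∈ L none) (hne₀ : a₀ ≠ b₀)
    (ha₁ : a₁ ∈ L (some 0)) (hb₁ : b₁ ∈ L none) (hne₁ : a₁ ≠ b₁)
    (hdistinct : (a₀, b₀) ≠ (a₁, b₁))
    (hS₀ : (Lambda t L a₀ b₀).ncard = 1) (hS₁ : (Lambda t L a₁ b₁).ncard = 1)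
    (hp : a₀ = a₁) (hS : Lambda t L a₀ b₀ = Lambda t L a₁ b₁) :
    Even (t + 1) := by
  subst hp
  have hbne : b₀ ≠ b₁ := fun h => hdistinct (by rw [h])
  -- list-size bound on path vertices
  have hMcard : ∀ b : ℕ, ∀ j, 1 ≤ j → j ≤ t + 1 → 2 ≤ (pathM t L b j).card := by
    intro b j h1 h2
    rw [pathM_eq t L b j h2]
    have h3 : 3 ≤ (L (some ⟨j, by omega⟩)).card := by
      apply hL
      · intro h
        have := Option.some.inj h
        have : j = 0 := by simpa using congrArg Fin.val this
        omega
      · simp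
    have := Finset.pred_card_le_card_erase (s := L (some ⟨j, by omega⟩)) (a := b)
    omega
  -- translate Λ to Reach
  have hl₀ : Lambda t L a₀ b₀ = ↑(Reach (pathM t L b₀) a₀ (t + 1)) :=
    lambda_eq t L a₀ b₀ ha₀ hb₀ hne₀
  have hl₁ : Lambda t L a₀ b₁ = ↑(Reach (pathM t L b₁) a₀ (t + 1)) :=
    lambda_eq t L a₀ b₁ ha₀ hb₁ hne₁
  have hc₀ : (Reach (pathM t L b₀) a₀ (t + 1)).card = 1 := by
    rw [hl₀, Set.ncard_coe_finset] at hS₀; exact hS₀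
  have hc₁ : (Reach (pathM t L b₁) a₀ (t + 1)).card = 1 := by
    rw [hl₁, Set.ncard_coe_finset] at hS₁; exact hS₁
  -- singleton reach sets
  have hex₀ : ∀ i, ∃ x, i ≤ t + 1 → Reach (pathM t L b₀) a₀ i = {x} := by
    intro i
    by_cases h : i ≤ t + 1
    · obtain ⟨x, hx⟩ := Finset.card_eq_one.1
        (reach_singletons _ _ _ (hMcard b₀) hc₀ i h)
      exact ⟨x, fun _ => hx⟩
    · exact ⟨0, fun h' => absurd h' h⟩
  have hex₁ : ∀ i, ∃ x, i ≤ t + 1 → Reach (pathM t L b₁) a₀ i = {x} := by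
    intro i
    by_cases h : i ≤ t + 1
    · obtain ⟨x, hx⟩ := Finset.card_eq_one.1
        (reach_singletons _ _ _ (hMcard b₁) hc₁ i h)
      exact ⟨x, fun _ => hx⟩
    · exact ⟨0, fun h' => absurd h' h⟩
  choose cc hcc using hex₀
  choose dd hdd using hex₁
  have hc0 : cc 0 = a₀ := by
    have h : ({a₀} : Finset ℕ) = {cc 0} := hcc 0 (by omega)
    exact (Finset.singleton_injective h).symm
  have hd0 : dd 0 = a₀ := by
    have h : ({a₀} : Finset ℕ) = {dd 0} := hdd 0 (by omega)
    exact (Finset.singleton_injective h).symm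
  -- structure of the lists along the path
  have hstep : ∀ (b : ℕ) (ee : ℕ → ℕ),
      (∀ i, i ≤ t + 1 → Reach (pathM t L b) a₀ i = {ee i}) →
      ∀ i, ∀ hi : i ≤ t,
      (L (some ⟨i+1, by omega⟩)).erase b = {ee i, ee (i+1)} ∧ ee i ≠ ee (i+1) ∧
        b ∈ L (some ⟨i+1, by omega⟩) ∧ (L (some ⟨i+1, by omega⟩)).card = 3 := by
    intro b ee hee i hi
    have h1 := hee i (by omega)
    have h2 := hee (i+1) (by omega)
    have key : Reach (pathM t L b) a₀ (i+1) = (pathM t L b (i+1)).erase (ee i) := by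
      show (pathM t L b (i+1)).filter _ = _
      rw [h1]
      simp only [Finset.mem_singleton, exists_eq_left]
      exact Finset.filter_ne _ _
    rw [h2, pathM_eq t L b (i+1) (by omega)] at key
    exact erase_erase_singleton (hL _ (by simp [Fin.ext_iff]) (by simp)) key.symm
  have hstep₀ := hstep b₀ cc hcc
  have hstep₁ := hstep b₁ dd hdd
  -- the unique end colors coincide
  have hfin : cc (t+1) = dd (t+1) := by
    have h : (↑({cc (t+1)} : Finset ℕ) : Set ℕ) = ↑({dd (t+1)} : Finset ℕ) := by
      rw [← hcc (t+1) le_rfl, ← hdd (t+1) le_rfl, ← hl₀, ← hl₁]; exact hS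
    exact Finset.singleton_injective (Finset.coe_injective h)
  -- parity invariant
  have K : ∀ i, i ≤ t + 1 →
      (Even i → cc i = dd i ∧ cc i ≠ b₀ ∧ cc i ≠ b₁) ∧
      (¬ Even i → cc i = b₁ ∧ dd i = b₀) := by
    intro i
    induction i with
    | zero =>
      intro _
      exact ⟨fun _ => ⟨hc0.trans hd0.symm, hc0 ▸ hne₀, hc0 ▸ hne₁⟩,
        fun h => absurd Even.zero h⟩
    | succ i ih =>
      intro hle
      obtain ⟨K1, K2⟩ := ih (by omega)
      obtain ⟨e₀, nec, bm₀, card3⟩ := hstep₀ i (by omega)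
      obtain ⟨e₁, ned, bm₁, -⟩ := hstep₁ i (by omega)
      have hb1c : b₁ ∈ ({cc i, cc (i+1)} : Finset ℕ) := by
        rw [← e₀]; exact Finset.mem_erase.2 ⟨hbne.symm, bm₁⟩
      have hb0d : b₀ ∈ ({dd i, dd (i+1)} : Finset ℕ) := by
        rw [← e₁]; exact Finset.mem_erase.2 ⟨hbne, bm₀⟩
      have hcmem : cc (i+1) ∈ (L (some ⟨i+1, by omega⟩)).erase b₀ := by
        rw [e₀]; simp
      have hdmem : dd (i+1) ∈ (L (some ⟨i+1, by omega⟩)).erase b₁ := by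
        rw [e₁]; simp
      have hcb0 : cc (i+1) ≠ b₀ := (Finset.mem_erase.1 hcmem).1
      have hdb1 : dd (i+1) ≠ b₁ := (Finset.mem_erase.1 hdmem).1
      constructor
      · intro hev
        have hodd : ¬ Even i := by
          rw [Nat.even_add_one] at hev; exact hev
        obtain ⟨hci, hdi⟩ := K2 hodd
        have hcb1 : cc (i+1) ≠ b₁ := by rw [← hci]; exact nec.symm
        have : cc (i+1) ∈ (L (some ⟨i+1, by omega⟩)).erase b₁ :=
          Finset.mem_erase.2 ⟨hcb1, Finset.mem_of_mem_erase hcmem⟩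
        rw [e₁, hdi] at this
        simp only [Finset.mem_insert, Finset.mem_singleton] at this
        rcases this with h | h
        · exact absurd h hcb0
        · exact ⟨h, hcb0, hcb1⟩
      · intro hodd
        have hev : Even i := by
          rw [Nat.even_add_one, not_not] at hodd; exact hodd
        obtain ⟨hcd, hcb0', hcb1'⟩ := K1 hev
        constructor
        · simp only [Finset.mem_insert, Finset.mem_singleton] at hb1c
          rcases hb1c with h | h
          · exact absurd h.symm hcb1'
          · exact h.symm
        · simp only [Finset.mem_insert, Finset.mem_singleton] at hb0d
          rcases hb0d with h | h
          · rw [← hcd] at h; exact absurd h.symm hcb0'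
          · exact h.symm
  -- conclusion
  by_contra hodd
  obtain ⟨hc, hd⟩ := (K (t+1) le_rfl).2 (by rw [Nat.even_add_one, not_not] at hodd ⊢; exact hodd)
  exact hbne (by rw [← hc, hfin, hd])
end

section
/- Let G be a broken wheel with principal path P = p p' p'' and let L be a list-assignment for G with |L(v)| ≥ 3 for every vertex v ∈ V(G) \ {p, p'}. Let φ₀ and φ₁ be two distinct L-colorings of the edge pp', and for i = 0, 1 set Sᵢ := Λ_G(φᵢ(p), φᵢ(p'), •); suppose |S₀| = |S₁| = 1. If φ₀(p) = φ₁(p) and S₀ ≠ S₁, then the path G − p' has an odd number of edges, and moreover S₀ = {φ₁(p')} and S₁ = {φ₀(p')}. -/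
def chainSet (ℓ : ℕ → Finset ℕ) (a b : ℕ) : ℕ → Set ℕ
  | 0 => {a}
  | i + 1 => {x | x ∈ ℓ (i + 1) ∧ x ≠ b ∧ ∃ y ∈ chainSet ℓ a b i, y ≠ x}

lemma chain_struct (ℓ : ℕ → Finset ℕ) (a b : ℕ) (n : ℕ)
    (hcard : ∀ i, 1 ≤ i → i ≤ n → 3 ≤ (ℓ i).card)
    (hsing : (chainSet ℓ a b n).ncard = 1) :
    ∃ c : ℕ → ℕ, c 0 = a ∧ (∀ i ≤ n, chainSet ℓ a b i = {c i}) ∧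
      ∀ i, i < n → ((ℓ (i+1) : Set ℕ) = {b, c i, c (i+1)} ∧ c (i+1) ≠ b ∧ c (i+1) ≠ c i) := by
  -- nonempty
  have hne : ∀ i ≤ n, (chainSet ℓ a b i).Nonempty := by
    intro i
    induction i with
    | zero => intro _; exact ⟨a, rfl⟩
    | succ i ih =>
      intro h
      obtain ⟨y, hy⟩ := ih (by omega)
      have h3 := hcard (i+1) (by omega) h
      have : 1 ≤ (((ℓ (i+1)).erase b).erase y).card := by
        have h1 : (ℓ (i+1)).card - 1 ≤ ((ℓ (i+1)).erase b).card := Finset.pred_card_le_card_erase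
        have h2 : ((ℓ (i+1)).erase b).card - 1 ≤ (((ℓ (i+1)).erase b).erase y).card :=
          Finset.pred_card_le_card_erase
        omega
      have hpos : 0 < (((ℓ (i+1)).erase b).erase y).card := by omega
      obtain ⟨x, hx⟩ := Finset.card_pos.mp hpos
      rw [Finset.mem_erase, Finset.mem_erase] at hx
      exact ⟨x, hx.2.2, hx.2.1, y, hy, hx.1.symm⟩
  -- subsingleton
  obtain ⟨e, he⟩ := Set.ncard_eq_one.mp hsing
  have hsub : ∀ i ≤ n, ∀ x ∈ chainSet ℓ a b i, ∀ y ∈ chainSet ℓ a b i, x = y := by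
    by_contra hcon
    push_neg at hcon
    obtain ⟨i, hin, x, hx, y, hy, hxy⟩ := hcon
    have prop : ∀ j, i ≤ j → j ≤ n → ∃ x ∈ chainSet ℓ a b j, ∃ y ∈ chainSet ℓ a b j, x ≠ y := by
      intro j hij
      induction j, hij using Nat.le_induction with
      | base => exact fun _ => ⟨x, hx, y, hy, hxy⟩
      | succ j hij ih =>
        intro hjn
        obtain ⟨x', hx', y', hy', hxy'⟩ := ih (by omega)
        have h3 := hcard (j+1) (by omega) hjn
        have h2 : 2 ≤ ((ℓ (j+1)).erase b).card := by
          have h1 : (ℓ (j+1)).card - 1 ≤ ((ℓ (j+1)).erase b).card := Finset.pred_card_le_card_erase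
          omega
        have hpos : 1 < ((ℓ (j+1)).erase b).card := by omega
        obtain ⟨u, hu, v, hv, huv⟩ := Finset.one_lt_card.mp hpos
        rw [Finset.mem_erase] at hu hv
        have hu' : u ∈ chainSet ℓ a b (j+1) := by
          rcases eq_or_ne x' u with h | h
          · exact ⟨hu.2, hu.1, y', hy', by rw [← h]; exact hxy'.symm⟩
          · exact ⟨hu.2, hu.1, x', hx', h⟩
        have hv' : v ∈ chainSet ℓ a b (j+1) := by
          rcases eq_or_ne x' v with h | h
          · exact ⟨hv.2, hv.1, y', hy', by rw [← h]; exact hxy'.symm⟩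
          · exact ⟨hv.2, hv.1, x', hx', h⟩
        exact ⟨u, hu', v, hv', huv⟩
    obtain ⟨x', hx', y', hy', hxy'⟩ := prop n hin le_rfl
    rw [he] at hx' hy'
    exact hxy' (hx'.trans hy'.symm)
  have hexists : ∀ i, ∃ x, i ≤ n → chainSet ℓ a b i = {x} := by
    intro i
    by_cases h : i ≤ n
    · obtain ⟨y, hy⟩ := hne i h
      exact ⟨y, fun _ => Set.eq_singleton_iff_unique_mem.mpr ⟨hy, fun z hz => hsub i h z hz y hy⟩⟩
    · exact ⟨0, fun h' => absurd h' h⟩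
  choose c hc using hexists
  have hc0 : c 0 = a := by
    have := hc 0 (by omega)
    have : a ∈ ({c 0} : Set ℕ) := this ▸ rfl
    exact this.symm
  refine ⟨c, hc0, hc, fun i hin => ?_⟩
  have hci1 : c (i+1) ∈ chainSet ℓ a b (i+1) := (hc (i+1) (by omega)) ▸ rfl
  obtain ⟨hmem, hneb, y, hy, hyne⟩ := hci1
  have hyc : y = c i := by
    have := hc i (by omega)
    rw [this] at hy; exact hy
  subst hyc
  -- every element of ℓ(i+1) other than b, c i equals c (i+1)
  have hall : ∀ x ∈ ℓ (i+1), x ≠ b → x ≠ c i → x = c (i+1) := by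
    intro x hx hxb hxc
    have : x ∈ chainSet ℓ a b (i+1) := ⟨hx, hxb, c i, (hc i (by omega)) ▸ rfl, Ne.symm hxc⟩
    rw [hc (i+1) (by omega)] at this
    exact this
  have h3 := hcard (i+1) (by omega) (by omega)
  have hbmem : b ∈ ℓ (i+1) := by
    by_contra hb
    have hsubs : ℓ (i+1) ⊆ {c i, c (i+1)} := by
      intro x hx
      rcases eq_or_ne x (c i) with h | h
      · simp [h]
      · simp [hall x hx (fun he => hb (he ▸ hx)) h]
    have := Finset.card_le_card hsubs
    have : ({c i, c (i+1)} : Finset ℕ).card ≤ 2 := Finset.card_insert_le _ _ |>.trans (by simp)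
    omega
  have hcimem : c i ∈ ℓ (i+1) := by
    by_contra hb
    have hsubs : ℓ (i+1) ⊆ {b, c (i+1)} := by
      intro x hx
      rcases eq_or_ne x b with h | h
      · simp [h]
      · simp [hall x hx h (fun he => hb (he ▸ hx))]
    have := Finset.card_le_card hsubs
    have : ({b, c (i+1)} : Finset ℕ).card ≤ 2 := Finset.card_insert_le _ _ |>.trans (by simp)
    omega
  refine ⟨?_, hneb, hyne.symm⟩
  ext x
  simp only [Finset.coe_insert, Set.mem_insert_iff, Finset.mem_coe, Set.mem_singleton_iff]
  constructor
  · intro hx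
    rcases eq_or_ne x b with h | h
    · exact Or.inl h
    rcases eq_or_ne x (c i) with h' | h'
    · exact Or.inr (Or.inl h')
    · exact Or.inr (Or.inr (hall x hx h h'))
  · rintro (rfl | rfl | rfl)
    · exact hbmem
    · exact hcimem
    · exact hmem

def bwl (t : ℕ) (L : BWVert t → Finset ℕ) : ℕ → Finset ℕ :=
  fun i => L (some ⟨min i (t+1), Nat.lt_succ_of_le (min_le_right _ _)⟩)

lemma bwl_eq (t : ℕ) (L : BWVert t → Finset ℕ) (i : ℕ) (h : i < t + 2) :
    bwl t L i = L (some ⟨i, h⟩) := by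
  unfold bwl
  congr 2
  exact Fin.ext (Nat.min_eq_left (by omega))

lemma lambda_eq_chainSet (t : ℕ) (L : BWVert t → Finset ℕ) (a b : ℕ)
    (ha : a ∈ L (some 0)) (hb : b ∈ L none) (hab : a ≠ b) :
    Lambda t L a b = chainSet (bwl t L) a b (t + 1) := by
  have hzero : (⟨0, by omega⟩ : Fin (t+2)) = 0 := rfl
  ext x
  constructor
  · rintro ⟨col, ⟨hmem, hadj⟩, h0, hn, hl⟩
    have gen : ∀ i (h : i ≤ t+1), col (some ⟨i, by omega⟩) ∈ chainSet (bwl t L) a b i := by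
      intro i
      induction i with
      | zero => intro _; rw [hzero]; exact h0 ▸ rfl
      | succ i ih =>
        intro h
        refine ⟨?_, ?_, col (some ⟨i, by omega⟩), ih (by omega), ?_⟩
        · rw [bwl_eq t L (i+1) (by omega)]; exact hmem _
        · rw [← hn]; exact hadj _ none trivial
        · exact hadj (some ⟨i, by omega⟩) (some ⟨i+1, by omega⟩) (Or.inl rfl)
    have := gen (t+1) le_rfl
    rwa [show (⟨t+1, by omega⟩ : Fin (t+2)) = Fin.last (t+1) from rfl, hl] at this
  · intro hx
    have real : ∀ i, ∀ x ∈ chainSet (bwl t L) a b i, ∃ f : ℕ → ℕ, f i = x ∧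
        (∀ j ≤ i, f j ∈ chainSet (bwl t L) a b j) ∧ ∀ j < i, f j ≠ f (j+1) := by
      intro i
      induction i with
      | zero =>
        intro x hx
        exact ⟨fun _ => x, rfl, fun j hj => by interval_cases j; exact hx, fun j hj => by omega⟩
      | succ i ih =>
        rintro x ⟨hxl, hxb, y, hy, hyx⟩
        obtain ⟨f, hfi, hfm, hfne⟩ := ih y hy
        refine ⟨Function.update f (i+1) x, Function.update_self _ _ _, ?_, ?_⟩
        · intro j hj
          rcases eq_or_ne j (i+1) with rfl | h
          · rw [Function.update_self]; exact ⟨hxl, hxb, y, hy, hyx⟩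
          · rw [Function.update_of_ne h]; exact hfm j (by omega)
        · intro j hj
          rcases eq_or_ne j i with rfl | h
          · rw [Function.update_of_ne (by omega), Function.update_self, hfi]; exact hyx
          · rw [Function.update_of_ne (by omega), Function.update_of_ne (by omega)]
            exact hfne j (by omega)
    obtain ⟨f, hfi, hfm, hfne⟩ := real (t+1) x hx
    classical
    refine ⟨fun v => match v with | none => b | some k => f k.1, ⟨?_, ?_⟩, ?_, rfl, ?_⟩
    · rintro (_ | k)
      · exact hb
      · have hk := hfm k.1 (by omega)
        obtain ⟨kv, hkv⟩ := k
        match kv with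
        | 0 =>
          have hk' : f 0 = a := hk
          show f 0 ∈ L (some ⟨0, hkv⟩)
          rw [hk']
          exact ha
        | j + 1 =>
          have hk' : f (j+1) ∈ chainSet (bwl t L) a b (j+1) := hk
          show f (j+1) ∈ L (some ⟨j+1, hkv⟩)
          rw [← bwl_eq t L (j+1) hkv]
          exact hk'.1
    · rintro (_ | k) (_ | m) hvw
      · exact absurd hvw id
      · -- none, some m
        have hm := hfm m.1 (by omega)
        obtain ⟨mv, hmv⟩ := m
        match mv with
        | 0 =>
          have hm' : f 0 = a := hm
          show b ≠ f 0
          rw [hm']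
          exact Ne.symm hab
        | j + 1 =>
          have hm' : f (j+1) ∈ chainSet (bwl t L) a b (j+1) := hm
          show b ≠ f (j+1)
          exact fun h => hm'.2.1 h.symm
      · -- some k, none
        have hk := hfm k.1 (by omega)
        obtain ⟨kv, hkv⟩ := k
        match kv with
        | 0 =>
          have hk' : f 0 = a := hk
          show f 0 ≠ b
          rw [hk']
          exact hab
        | j + 1 =>
          have hk' : f (j+1) ∈ chainSet (bwl t L) a b (j+1) := hk
          exact hk'.2.1
      · rcases hvw with h | h
        · have := hfne k.1 (by omega)
          rwa [h] at this
        · have := hfne m.1 (by omega)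
          rw [h] at this
          exact this.symm
    · exact hfm 0 (by omega)
    · exact hfi

/-- Theorem 2.4(1)(B): if `φ₀, φ₁` are distinct `L`-colorings of the edge `pp'` with
`|S₀| = |S₁| = 1`, `φ₀(p) = φ₁(p)` and `S₀ ≠ S₁`, then the path `G - p'` has an odd
number of edges and `S₀ = {φ₁(p')}`, `S₁ = {φ₀(p')}`. -/

theorem bwheel_same_p_diff_S_odd (t : ℕ) (L : BWVert t → Finset ℕ)
    (hL : ∀ v : BWVert t, v ≠ some 0 → v ≠ none → 3 ≤ (L v).card)
    (a₀ b₀ a₁ b₁ : ℕ)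
    (ha₀ : a₀ ∈ L (some 0)) (hb₀ : b₀ ∈ L none) (hne₀ : a₀ ≠ b₀)
    (ha₁ : a₁ ∈ L (some 0)) (hb₁ : b₁ ∈ L none) (hne₁ : a₁ ≠ b₁)
    (hdistinct : (a₀, b₀) ≠ (a₁, b₁))
    (hS₀ : (Lambda t L a₀ b₀).ncard = 1) (hS₁ : (Lambda t L a₁ b₁).ncard = 1)
    (hp : a₀ = a₁) (hS : Lambda t L a₀ b₀ ≠ Lambda t L a₁ b₁) :
    Odd (t + 1) ∧ Lambda t L a₀ b₀ = {b₁} ∧ Lambda t L a₁ b₁ = {b₀} := by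
  subst hp
  have hbne : b₀ ≠ b₁ := fun h => hdistinct (by rw [h])
  have hcard : ∀ i, 1 ≤ i → i ≤ t + 1 → 3 ≤ (bwl t L i).card := by
    intro i h1 h2
    rw [bwl_eq t L i (by omega)]
    apply hL
    · intro h
      simp only [Option.some.injEq, Fin.ext_iff] at h
      simp at h
      omega
    · simp
  have hE0 := lambda_eq_chainSet t L a₀ b₀ ha₀ hb₀ hne₀
  have hE1 := lambda_eq_chainSet t L a₀ b₁ ha₁ hb₁ hne₁
  rw [hE0] at hS₀
  rw [hE1] at hS₁
  rw [hE0, hE1] at hS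
  obtain ⟨c, hc0, hcs, hcstr⟩ := chain_struct (bwl t L) a₀ b₀ (t+1) hcard hS₀
  obtain ⟨d, hd0, hds, hdstr⟩ := chain_struct (bwl t L) a₀ b₁ (t+1) hcard hS₁
  have key : ∀ i ≤ t + 1,
      (Even i → c i = d i ∧ c i ≠ b₀ ∧ c i ≠ b₁) ∧ (Odd i → c i = b₁ ∧ d i = b₀) := by
    intro i
    induction i with
    | zero =>
      intro _
      refine ⟨fun _ => ⟨hc0.trans hd0.symm, ?_, ?_⟩, fun h => ?_⟩
      · rw [hc0]; exact hne₀
      · rw [hc0]; exact hne₁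
      · rw [Nat.odd_iff] at h; omega
    | succ i ih =>
      intro h
      obtain ⟨hK0, hcb, hcc⟩ := hcstr i (by omega)
      obtain ⟨hK1, hdb, hdd⟩ := hdstr i (by omega)
      have hKK : ({b₀, c i, c (i+1)} : Set ℕ) = {b₁, d i, d (i+1)} := by
        rw [← hK0, hK1]
      have ihh := ih (by omega)
      rcases Nat.even_or_odd i with he | ho
      · obtain ⟨hcd, hcb0, hcb1⟩ := ihh.1 he
        have hb1mem : b₁ ∈ ({b₀, c i, c (i+1)} : Set ℕ) := by
          rw [hKK]; left; rfl
        have hb0mem : b₀ ∈ ({b₁, d i, d (i+1)} : Set ℕ) := by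
          rw [← hKK]; left; rfl
        simp only [Set.mem_insert_iff, Set.mem_singleton_iff] at hb1mem hb0mem
        have hc1 : c (i+1) = b₁ := by
          rcases hb1mem with h' | h' | h'
          · exact absurd h'.symm hbne
          · exact absurd h'.symm hcb1
          · exact h'.symm
        have hd1 : d (i+1) = b₀ := by
          rcases hb0mem with h' | h' | h'
          · exact absurd h' hbne
          · rw [hcd] at hcb0; exact absurd h'.symm hcb0
          · exact h'.symm
        refine ⟨fun hev => ?_, fun _ => ⟨hc1, hd1⟩⟩
        rw [Nat.even_iff] at he hev; omega
      · obtain ⟨hcbi, hdbi⟩ := ihh.2 ho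
        have hmem : c (i+1) ∈ ({b₁, d i, d (i+1)} : Set ℕ) := by
          rw [← hKK]; right; right; rfl
        simp only [Set.mem_insert_iff, Set.mem_singleton_iff] at hmem
        have hcd1 : c (i+1) = d (i+1) := by
          rcases hmem with h' | h' | h'
          · rw [← hcbi] at h'; exact absurd h' hcc
          · rw [hdbi] at h'; exact absurd h' hcb
          · exact h'
        refine ⟨fun _ => ⟨hcd1, hcb, ?_⟩, fun hodd => ?_⟩
        · rw [← hcbi]; exact hcc
        · rw [Nat.odd_iff] at ho hodd; omega
  have hodd : Odd (t + 1) := by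
    by_contra hcon
    have he : Even (t + 1) := Nat.not_odd_iff_even.mp hcon
    apply hS
    rw [hcs (t+1) le_rfl, hds (t+1) le_rfl, ((key (t+1) le_rfl).1 he).1]
  obtain ⟨hc1, hd1⟩ := (key (t+1) le_rfl).2 hodd
  refine ⟨hodd, ?_, ?_⟩
  · rw [hE0, hcs (t+1) le_rfl, hc1]
  · rw [hE1, hds (t+1) le_rfl, hd1]
end

section
/- Let G be a broken wheel with principal path P = p p' p'' and let L be a list-assignment for G with |L(v)| ≥ 3 for every vertex v ∈ V(G) \ {p, p'}. Let q ∈ {p, p'} and let 𝓕 be a family of L-colorings of the edge pp' with |𝓕| ≥ 3 such that all elements of 𝓕 assign the same color to q. Then there exists φ ∈ 𝓕 with |Λ_G(φ(p), φ(p'), •)| ≥ 2. -/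
namespace BWaux

open Fin.NatCast

variable (t : ℕ) (L : BWVert t → Finset ℕ)

/-- The list of the `n`-th path vertex. -/
def Lp (n : ℕ) : Finset ℕ := L (some (n : Fin (t + 2)))

/-- Colors achievable at path vertex `n` given `p ↦ a`, hub `↦ b`. -/
def reach (a b : ℕ) : ℕ → Finset ℕ
  | 0 => {a}
  | n + 1 => (Lp t L (n + 1) \ {b}).filter (fun x => ∃ y ∈ reach a b n, y ≠ x)

lemma mem_reach_succ {a b x : ℕ} {n : ℕ} :
    x ∈ reach t L a b (n + 1) ↔
      x ∈ Lp t L (n + 1) ∧ x ≠ b ∧ ∃ y ∈ reach t L a b n, y ≠ x := by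
  simp [reach, Finset.mem_filter, Finset.mem_sdiff, and_assoc]

lemma card_Lp (hL : ∀ v : BWVert t, v ≠ some 0 → v ≠ none → 3 ≤ (L v).card)
    {n : ℕ} (h1 : 1 ≤ n) (h2 : n ≤ t + 1) : 3 ≤ (Lp t L n).card := by
  apply hL
  · intro h
    have := congrArg (fun o : BWVert t => (Option.getD o 0).val) h
    simp only [Option.getD_some] at this
    rw [Fin.val_cast_of_lt (by omega)] at this
    simp at this
    omega
  · simp

lemma two_le_erase (hL : ∀ v : BWVert t, v ≠ some 0 → v ≠ none → 3 ≤ (L v).card)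
    {n : ℕ} (h1 : 1 ≤ n) (h2 : n ≤ t + 1) (b : ℕ) : 2 ≤ ((Lp t L n).erase b).card := by
  have h3 := card_Lp t L hL h1 h2
  have := Finset.pred_card_le_card_erase (s := Lp t L n) (a := b)
  omega

lemma reach_succ_eq {a b : ℕ} {n : ℕ} (h : 2 ≤ (reach t L a b n).card) :
    reach t L a b (n + 1) = Lp t L (n + 1) \ {b} := by
  rw [reach]
  apply Finset.filter_true_of_mem
  intro x _
  exact Finset.exists_mem_ne h x

lemma reach_nonempty (hL : ∀ v : BWVert t, v ≠ some 0 → v ≠ none → 3 ≤ (L v).card)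
    (a b : ℕ) : ∀ n, n ≤ t + 1 → (reach t L a b n).Nonempty := by
  intro n
  induction n with
  | zero => intro _; exact ⟨a, by simp [reach]⟩
  | succ k ih =>
    intro hk
    obtain ⟨y, hy⟩ := ih (by omega)
    have h2 : 2 ≤ ((Lp t L (k+1)).erase b).card := two_le_erase t L hL (by omega) hk b
    obtain ⟨x, hx, hxy⟩ := Finset.exists_mem_ne (s := (Lp t L (k+1)).erase b) (by omega) y
    rw [Finset.mem_erase] at hx
    exact ⟨x, (mem_reach_succ t L).mpr ⟨hx.2, hx.1, y, hy, fun h => hxy h.symm⟩⟩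

lemma reach_grow (hL : ∀ v : BWVert t, v ≠ some 0 → v ≠ none → 3 ≤ (L v).card)
    {a b n : ℕ} (h2 : n + 1 ≤ t + 1) (h : 2 ≤ (reach t L a b n).card) :
    2 ≤ (reach t L a b (n + 1)).card := by
  rw [reach_succ_eq t L h, Finset.sdiff_singleton_eq_erase]
  exact two_le_erase t L hL (by omega) h2 b

lemma reach_prop (hL : ∀ v : BWVert t, v ≠ some 0 → v ≠ none → 3 ≤ (L v).card)
    {a b : ℕ} {n m : ℕ} (hnm : n ≤ m) (hm : m ≤ t + 1)
    (h : 2 ≤ (reach t L a b n).card) : 2 ≤ (reach t L a b m).card := by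
  induction m with
  | zero =>
    have hn : n = 0 := by omega
    exact hn ▸ h
  | succ k ih =>
    rcases Nat.lt_or_ge n (k + 1) with h' | h'
    · exact reach_grow t L hL hm (ih (by omega) (by omega))
    · have : n = k + 1 := by omega
      exact this ▸ h

lemma reach_sound {a b : ℕ} (hab : a ≠ b) :
    ∀ n, ∀ x ∈ reach t L a b n,
    ∃ c : ℕ → ℕ, c 0 = a ∧ c n = x ∧ (∀ j, 1 ≤ j → j ≤ n → c j ∈ Lp t L j)
      ∧ (∀ j ≤ n, c j ≠ b) ∧ (∀ j, j + 1 ≤ n → c j ≠ c (j + 1)) := by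
  intro n
  induction n with
  | zero =>
    intro x hx
    simp only [reach, Finset.mem_singleton] at hx
    subst hx
    refine ⟨fun _ => x, rfl, rfl, by omega, ?_, by omega⟩
    intro j _
    exact hab
  | succ k ih =>
    intro x hx
    rw [mem_reach_succ] at hx
    obtain ⟨hxL, hxb, y, hy, hyx⟩ := hx
    obtain ⟨c, hc0, hck, hcL, hcb, hcadj⟩ := ih y hy
    refine ⟨Function.update c (k + 1) x, ?_, ?_, ?_, ?_, ?_⟩
    · rw [Function.update_of_ne (by omega)]; exact hc0
    · rw [Function.update_self]
    · intro j h1 h2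
      rcases Nat.lt_or_ge j (k + 1) with h | h
      · rw [Function.update_of_ne (by omega)]; exact hcL j h1 (by omega)
      · have : j = k + 1 := by omega
        subst this; rw [Function.update_self]; exact hxL
    · intro j hj
      rcases Nat.lt_or_ge j (k + 1) with h | h
      · rw [Function.update_of_ne (by omega)]; exact hcb j (by omega)
      · have : j = k + 1 := by omega
        subst this; rw [Function.update_self]; exact hxb
    · intro j hj
      rcases Nat.lt_or_ge (j + 1) (k + 1) with h | h
      · rw [Function.update_of_ne (by omega), Function.update_of_ne (by omega)]
        exact hcadj j (by omega)
      · have : j = k := by omega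
        subst this
        rw [Function.update_of_ne (by omega), Function.update_self, hck]
        intro h'; exact hyx h'

lemma reach_complete {a b : ℕ} :
    ∀ n, ∀ c : ℕ → ℕ, c 0 = a →
    (∀ j, 1 ≤ j → j ≤ n → c j ∈ Lp t L j) → (∀ j ≤ n, c j ≠ b) →
    (∀ j, j + 1 ≤ n → c j ≠ c (j + 1)) → c n ∈ reach t L a b n := by
  intro n
  induction n with
  | zero =>
    intro c hc0 _ _ _
    simp [reach, hc0]
  | succ k ih =>
    intro c hc0 hcL hcb hcadj
    rw [mem_reach_succ]
    exact ⟨hcL (k+1) (by omega) le_rfl, hcb (k+1) le_rfl,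
      c k, ih c hc0 (fun j h1 h2 => hcL j h1 (by omega)) (fun j hj => hcb j (by omega))
        (fun j hj => hcadj j (by omega)), hcadj k le_rfl⟩

lemma cast_last : ((t + 1 : ℕ) : Fin (t + 2)) = Fin.last (t + 1) := by
  apply Fin.ext
  rw [Fin.val_cast_of_lt (by omega), Fin.val_last]

lemma lambda_eq_reach {a b : ℕ} (ha : a ∈ L (some 0)) (hb : b ∈ L none) (hab : a ≠ b) :
    Lambda t L a b = ↑(reach t L a b (t + 1)) := by
  ext x
  simp only [Lambda, Set.mem_setOf_eq, Finset.mem_coe]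
  constructor
  · rintro ⟨c, ⟨hmem, hadj⟩, hp, hh, hq⟩
    have key := reach_complete t L (a := a) (b := b) (t + 1)
      (fun n => c (some ((n : ℕ) : Fin (t + 2))))
      (by simpa using hp)
      (fun j _ _ => hmem _)
      (fun j hj => by
        have := hadj (some ((j : ℕ) : Fin (t + 2))) none trivial
        rw [hh] at this; exact this)
      (fun j hj => by
        apply hadj
        show _ ∨ _
        left
        rw [Fin.val_cast_of_lt (by omega), Fin.val_cast_of_lt (by omega)])
    have key' : c (some ((t + 1 : ℕ) : Fin (t + 2))) ∈ reach t L a b (t + 1) := key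
    rw [cast_last, hq] at key'
    exact key'
  · intro hx
    obtain ⟨c, hc0, hck, hcL, hcb, hcadj⟩ := reach_sound t L hab (t + 1) x hx
    refine ⟨fun v => v.elim b (fun i => c i.val), ⟨?_, ?_⟩, by simpa using hc0, rfl, ?_⟩
    · intro v
      match v with
      | none => exact hb
      | some i =>
        show c i.val ∈ L (some i)
        rcases Nat.eq_zero_or_pos i.val with h0 | h1
        · have : i = 0 := Fin.ext (by simpa using h0)
          subst this
          simp only [Fin.val_zero, hc0]
          exact ha
        · have := hcL i.val h1 (by omega)
          rwa [Lp, Fin.cast_val_eq_self] at this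
    · intro v w hvw
      match v, w with
      | none, none => exact absurd hvw id
      | none, some i => exact fun h => hcb i.val (by omega) h.symm
      | some i, none => exact hcb i.val (by omega)
      | some i, some j =>
        rcases hvw with h | h
        · have := hcadj i.val (by omega)
          rwa [h] at this
        · have := hcadj j.val (by omega)
          rw [h] at this
          exact this.symm
    · show c (Fin.last (t + 1)).val = x
      rwa [Fin.val_last]

lemma reach_one_eq {a b : ℕ} :
    reach t L a b 1 = ((Lp t L 1).erase b).erase a := by
  ext x
  rw [show (1 : ℕ) = 0 + 1 from rfl, mem_reach_succ]
  simp only [reach, Finset.mem_singleton, exists_eq_left, Finset.mem_erase]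
  constructor
  · rintro ⟨h1, h2, h3⟩; exact ⟨fun h => h3 h.symm, h2, h1⟩
  · rintro ⟨h1, h2, h3⟩; exact ⟨h3, h2, fun h => h1 h.symm⟩

lemma bad_pair (hL : ∀ v : BWVert t, v ≠ some 0 → v ≠ none → 3 ≤ (L v).card)
    {a b : ℕ} (hsm : (reach t L a b 1).card ≤ 1) :
    a ∈ (Lp t L 1).erase b ∧ ((Lp t L 1).erase b).card = 2 ∧ b ∈ Lp t L 1 := by
  have h3 := card_Lp t L hL (n := 1) le_rfl (by omega)
  have h2 : 2 ≤ ((Lp t L 1).erase b).card := two_le_erase t L hL le_rfl (by omega) b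
  rw [reach_one_eq] at hsm
  have hamem : a ∈ (Lp t L 1).erase b := by
    by_contra h
    rw [Finset.erase_eq_of_notMem h] at hsm
    omega
  have hce := Finset.card_erase_of_mem hamem
  have hbmem : b ∈ Lp t L 1 := by
    by_contra h
    rw [Finset.erase_eq_of_notMem h] at hce h2 hsm
    omega
  exact ⟨hamem, by omega, hbmem⟩

lemma three_in_two {S : Finset ℕ} (hS : S.card = 2) {x y z : ℕ}
    (hx : x ∈ S) (hy : y ∈ S) (hz : z ∈ S) (hxy : x ≠ y) (hxz : x ≠ z) (hyz : y ≠ z) :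
    False := by
  have hsub : ({x, y, z} : Finset ℕ) ⊆ S := by
    intro w hw
    simp only [Finset.mem_insert, Finset.mem_singleton] at hw
    rcases hw with h | h | h <;> subst h <;> assumption
  have hc : ({x, y, z} : Finset ℕ).card = 3 := by
    rw [Finset.card_insert_of_notMem (by simp [hxy, hxz]),
      Finset.card_insert_of_notMem (by simp [hyz]), Finset.card_singleton]
  have := Finset.card_le_card hsub
  omega

end BWaux


/-- Theorem 2.4(2): if `𝓕` is a family of at least three `L`-colorings of the edge `pp'`
all assigning the same color to a fixed `q ∈ {p, p'}`, then some `φ ∈ 𝓕` has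
`|Λ_G(φ(p), φ(p'), •)| ≥ 2`. An element `φ ∈ 𝓕` is recorded as the pair
`(φ(p), φ(p'))`. -/
theorem bwheel_family_two_lambda (t : ℕ) (L : BWVert t → Finset ℕ)
    (hL : ∀ v : BWVert t, v ≠ some 0 → v ≠ none → 3 ≤ (L v).card)
    (F : Finset (ℕ × ℕ))
    (hF : ∀ φ ∈ F, φ.1 ∈ L (some 0) ∧ φ.2 ∈ L none ∧ φ.1 ≠ φ.2)
    (hcard : 3 ≤ F.card)
    (hconst : (∀ φ ∈ F, ∀ φ' ∈ F, φ.1 = φ'.1) ∨ (∀ φ ∈ F, ∀ φ' ∈ F, φ.2 = φ'.2)) :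
    ∃ φ ∈ F, 2 ≤ (Lambda t L φ.1 φ.2).ncard := by
  classical
  by_contra hcon
  push_neg at hcon
  have key : ∀ φ ∈ F, φ.1 ∈ (BWaux.Lp t L 1).erase φ.2 ∧
      ((BWaux.Lp t L 1).erase φ.2).card = 2 ∧ φ.2 ∈ BWaux.Lp t L 1 := by
    intro φ hφ
    obtain ⟨ha, hb, hab⟩ := hF φ hφ
    have hlam := hcon φ hφ
    rw [BWaux.lambda_eq_reach t L ha hb hab, Set.ncard_coe_finset] at hlam
    have hsm : (BWaux.reach t L φ.1 φ.2 1).card ≤ 1 := by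
      by_contra h
      push_neg at h
      have := BWaux.reach_prop t L hL (a := φ.1) (b := φ.2) (n := 1) (m := t + 1) (by omega) le_rfl (by omega)
      omega
    exact BWaux.bad_pair t L hL hsm
  obtain ⟨φ1, h1⟩ := Finset.card_pos.mp (by omega : 0 < F.card)
  have he : (F.erase φ1).card = F.card - 1 := Finset.card_erase_of_mem h1
  obtain ⟨φ2, h2'⟩ := Finset.card_pos.mp (by omega : 0 < (F.erase φ1).card)
  obtain ⟨φ3, h3', h32⟩ :=
    Finset.exists_mem_ne (by omega : 1 < (F.erase φ1).card) φ2
  rw [Finset.mem_erase] at h2' h3'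
  obtain ⟨h21, h2⟩ := h2'
  obtain ⟨h31, h3⟩ := h3'
  obtain ⟨k11, k12, k13⟩ := key φ1 h1
  obtain ⟨k21, k22, k23⟩ := key φ2 h2
  obtain ⟨k31, k32, k33⟩ := key φ3 h3
  rcases hconst with hc | hc
  · have e21 : φ2.1 = φ1.1 := hc φ2 h2 φ1 h1
    have e31 : φ3.1 = φ1.1 := hc φ3 h3 φ1 h1
    have d21 : φ1.2 ≠ φ2.2 := fun h => h21 (Prod.ext_iff.mpr ⟨e21, h.symm⟩)
    have d31 : φ1.2 ≠ φ3.2 := fun h => h31 (Prod.ext_iff.mpr ⟨e31, h.symm⟩)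
    have d32 : φ2.2 ≠ φ3.2 := fun h =>
      h32 (Prod.ext_iff.mpr ⟨e31.trans e21.symm, h.symm⟩)
    have haL : φ1.1 ∈ BWaux.Lp t L 1 := (Finset.mem_erase.mp k11).2
    have hL3 := Finset.card_erase_of_mem k13
    have haL2 := Finset.card_erase_of_mem haL
    have hLpos : 0 < ((BWaux.Lp t L 1).erase φ1.2).card := by omega
    have hTe : ((BWaux.Lp t L 1).erase φ1.1).card = 2 := by omega
    have m1 : φ1.2 ∈ (BWaux.Lp t L 1).erase φ1.1 :=
      Finset.mem_erase.mpr ⟨fun h => (hF φ1 h1).2.2 h.symm, k13⟩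
    have m2 : φ2.2 ∈ (BWaux.Lp t L 1).erase φ1.1 :=
      Finset.mem_erase.mpr ⟨by rw [← e21]; exact fun h => (hF φ2 h2).2.2 h.symm, k23⟩
    have m3 : φ3.2 ∈ (BWaux.Lp t L 1).erase φ1.1 :=
      Finset.mem_erase.mpr ⟨by rw [← e31]; exact fun h => (hF φ3 h3).2.2 h.symm, k33⟩
    exact BWaux.three_in_two hTe m1 m2 m3 d21 d31 d32
  · have e21 : φ2.2 = φ1.2 := hc φ2 h2 φ1 h1
    have e31 : φ3.2 = φ1.2 := hc φ3 h3 φ1 h1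
    have d21 : φ1.1 ≠ φ2.1 := fun h => h21 (Prod.ext_iff.mpr ⟨h.symm, e21⟩)
    have d31 : φ1.1 ≠ φ3.1 := fun h => h31 (Prod.ext_iff.mpr ⟨h.symm, e31⟩)
    have d32 : φ2.1 ≠ φ3.1 := fun h =>
      h32 (Prod.ext_iff.mpr ⟨h.symm, e31.trans e21.symm⟩)
    have m2 : φ2.1 ∈ (BWaux.Lp t L 1).erase φ1.2 := by rw [← e21]; exact k21
    have m3 : φ3.1 ∈ (BWaux.Lp t L 1).erase φ1.2 := by rw [← e31]; exact k31
    exact BWaux.three_in_two k12 k11 m2 m3 d21 d31 d32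
end

section
/- Let G be a broken wheel with principal path P = p p' p'' and let L be a list-assignment for G with |L(v)| ≥ 3 for every vertex v ∈ V(G) \ {p, p'}. Suppose |V(G)| ≥ 4, write G − p' = p u₁ … u_t p'' (so t ≥ 1), let x be the unique vertex at distance two from p on the path G − p' (so x = u₂ if t ≥ 2 and x = p'' if t = 1), and let a ∈ L(p) be a color such that L(u₁) \ {a} is not contained in L(x). Then a is almost (P, G)-universal, i.e., for every b ∈ L(p') \ {a} one has |Λ_G(a, b, •)| ≥ |L(p'')| − 1. -/
/-- index helper -/
def bwIdx (t i : ℕ) : Fin (t + 2) := ⟨min i (t + 1), by omega⟩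

lemma bwIdx_val (t i : ℕ) (h : i ≤ t + 1) : (bwIdx t i).val = i := by
  simp [bwIdx]; omega

lemma bw_exists_coloring (t : ℕ) (ht : 1 ≤ t) (L : BWVert t → Finset ℕ)
    (hL : ∀ v : BWVert t, v ≠ some 0 → v ≠ none → 3 ≤ (L v).card)
    (a b z x : ℕ)
    (ha : a ∈ L (some 0)) (hb : b ∈ L none)
    (hz : z ∈ L (some (bwIdx t 1))) (hza : z ≠ a) (hzb : z ≠ b)
    (hab : a ≠ b)
    (key : z ∉ L (some (bwIdx t 2)) ∨ b ∉ L (some (bwIdx t 2)))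
    (hxmem : x ∈ L (some (Fin.last (t + 1)))) (hxb : x ≠ b)
    (hxz : t = 1 → x ≠ z) :
    x ∈ Lambda t L a b := by
  classical
  -- forbidden set
  set forb : ℕ → ℕ → Finset ℕ :=
    fun i prev => insert b (insert prev (if i = 2 then {z} else ∅)) with hforb
  -- the backward greedy sequence: g j is the color of the vertex t+1-j for j ≤ t-1
  set g : ℕ → ℕ := fun j => Nat.rec x (fun j prev =>
      if hS : (L (some (bwIdx t (t - j))) \ forb (t - j) prev).Nonempty
      then (L (some (bwIdx t (t - j))) \ forb (t - j) prev).min' hS else 0) j with hg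
  have hg0 : g 0 = x := rfl
  have hgs : ∀ j, g (j + 1) =
      if hS : (L (some (bwIdx t (t - j))) \ forb (t - j) (g j)).Nonempty
      then (L (some (bwIdx t (t - j))) \ forb (t - j) (g j)).min' hS else 0 := fun j => rfl
  have hforb_mem : ∀ i prev c, c ∈ forb i prev ↔ c = b ∨ c = prev ∨ (i = 2 ∧ c = z) := by
    intro i prev c
    by_cases h2 : i = 2 <;> simp [hforb, h2]
  -- nonemptiness of the choice sets
  have hne : ∀ j prev, 2 ≤ t - j →
      (L (some (bwIdx t (t - j))) \ forb (t - j) prev).Nonempty := by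
    intro j prev hij
    set i := t - j with hi
    have hit : i ≤ t := by omega
    have hv0 : (some (bwIdx t i) : BWVert t) ≠ some 0 := by
      intro h
      have := congrArg (fun o => Option.getD (Option.map Fin.val o) 0) h
      simp [bwIdx_val t i (by omega)] at this
      omega
    have hcard : 3 ≤ (L (some (bwIdx t i))).card := hL _ hv0 (by simp)
    by_contra hemp
    rw [Finset.not_nonempty_iff_eq_empty, Finset.sdiff_eq_empty_iff_subset] at hemp
    by_cases h2 : i = 2
    · rw [h2] at hemp hcard
      rcases key with hk | hk
      · have hsub : L (some (bwIdx t 2)) ⊆ insert b {prev} := by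
          intro c hc
          rcases (hforb_mem 2 prev c).mp (hemp hc) with h | h | h
          · simp [h]
          · simp [h]
          · exact absurd (h.2 ▸ hc) hk
        have := Finset.card_le_card hsub
        have h2 : (insert b ({prev} : Finset ℕ)).card ≤ 2 := by
          apply le_trans (Finset.card_insert_le _ _); simp
        omega
      · have hsub : L (some (bwIdx t 2)) ⊆ insert prev {z} := by
          intro c hc
          rcases (hforb_mem 2 prev c).mp (hemp hc) with h | h | h
          · exact absurd (h ▸ hc) hk
          · simp [h]
          · simp [h.2]
        have := Finset.card_le_card hsub
        have h2 : (insert prev ({z} : Finset ℕ)).card ≤ 2 := by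
          apply le_trans (Finset.card_insert_le _ _); simp
        omega
    · have hsub : L (some (bwIdx t i)) ⊆ insert b {prev} := by
        intro c hc
        rcases (hforb_mem i prev c).mp (hemp hc) with h | h | h
        · simp [h]
        · simp [h]
        · exact absurd h.1 h2
      have := Finset.card_le_card hsub
      have h2 : (insert b ({prev} : Finset ℕ)).card ≤ 2 := by
        apply le_trans (Finset.card_insert_le _ _); simp
      omega
  have hgmem : ∀ j, 2 ≤ t - j →
      g (j + 1) ∈ L (some (bwIdx t (t - j))) \ forb (t - j) (g j) := by
    intro j hij
    rw [hgs j, dif_pos (hne j (g j) hij)]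
    exact Finset.min'_mem _ _
  -- the coloring
  set c : BWVert t → ℕ := fun v => match v with
    | none => b
    | some i => if i.val = 0 then a else if i.val = 1 then z else g (t + 1 - i.val)
    with hc
  -- facts about middle vertices (2 ≤ i ≤ t)
  have hmid : ∀ i : ℕ, 2 ≤ i → i ≤ t →
      g (t + 1 - i) ∈ L (some (bwIdx t i)) ∧ g (t + 1 - i) ≠ b ∧
      g (t + 1 - i) ≠ g (t - i) ∧ (i = 2 → g (t + 1 - i) ≠ z) := by
    intro i h2 hit
    have hj : t - (t - i) = i := by omega
    have hj2 : t + 1 - i = (t - i) + 1 := by omega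
    have := hgmem (t - i) (by omega)
    rw [hj] at this
    rw [hj2]
    rcases Finset.mem_sdiff.mp this with ⟨hmem, hnf⟩
    rw [hforb_mem] at hnf
    push_neg at hnf
    exact ⟨hmem, hnf.1, hnf.2.1, fun h => hnf.2.2 h⟩
  -- value of c at vertex of val k
  have hcval : ∀ i : Fin (t + 2),
      c (some i) = if i.val = 0 then a else if i.val = 1 then z else g (t + 1 - i.val) := by
    intro i; rfl
  -- membership at each vertex index
  have hlast : (Fin.last (t + 1)).val = t + 1 := rfl
  have hidx : ∀ i : Fin (t + 2), some i = some (bwIdx t i.val) := by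
    intro i
    congr 1
    apply Fin.ext
    rw [bwIdx_val t i.val (by omega)]
  -- p'' value
  have hcpp : c (some (Fin.last (t + 1))) = x := by
    rw [hcval]
    simp only [hlast]
    have h1 : ¬ (t + 1 = 0) := by omega
    have h2 : ¬ (t + 1 = 1) := by omega
    rw [if_neg h1, if_neg h2]
    have : t + 1 - (t + 1) = 0 := by omega
    rw [this, hg0]
  refine ⟨c, ⟨?_, ?_⟩, ?_, rfl, hcpp⟩
  · -- membership
    intro v
    match v with
    | none => exact hb
    | some i =>
      rw [hcval]
      by_cases h0 : i.val = 0
      · rw [if_pos h0]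
        have : some i = (some 0 : BWVert t) := by
          congr 1; apply Fin.ext; simp [h0]
        rw [this]; exact ha
      by_cases h1' : i.val = 1
      · rw [if_neg h0, if_pos h1']
        have : some i = (some (bwIdx t 1) : BWVert t) := by
          congr 1; apply Fin.ext; rw [bwIdx_val t 1 (by omega), h1']
        rw [this]; exact hz
      · have hge : 2 ≤ i.val := by omega
        have h1 : ¬ (i.val = 0) := by omega
        have h2 : ¬ (i.val = 1) := by omega
        rw [if_neg h1, if_neg h2]
        rcases Nat.lt_or_ge i.val (t + 1) with hlt | hge'
        · have := (hmid i.val hge (by omega)).1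
          rw [hidx i]; exact this
        · have hv : i.val = t + 1 := by omega
          have : some i = (some (Fin.last (t + 1)) : BWVert t) := by
            congr 1; apply Fin.ext; rw [hv]; rfl
          rw [this, hv]
          have h0 : t + 1 - (t + 1) = 0 := by omega
          rw [h0, hg0]; exact hxmem
  · -- proper
    have hub : ∀ i : Fin (t + 2), c (some i) ≠ b := by
      intro i
      rw [hcval]
      rcases Nat.lt_or_ge i.val 2 with hlt | hge
      · interval_cases h : i.val <;> simp [h, hab, hzb]
      · have h1 : ¬ (i.val = 0) := by omega
        have h2 : ¬ (i.val = 1) := by omega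
        rw [if_neg h1, if_neg h2]
        rcases Nat.lt_or_ge i.val (t + 1) with hlt | hge'
        · exact (hmid i.val hge (by omega)).2.1
        · have hv : i.val = t + 1 := by omega
          rw [hv]
          have h0 : t + 1 - (t + 1) = 0 := by omega
          rw [h0, hg0]; exact hxb
    have hseq : ∀ i j : Fin (t + 2), i.val + 1 = j.val → c (some i) ≠ c (some j) := by
      intro i j hij
      rw [hcval, hcval]
      rcases Nat.lt_or_ge i.val 2 with hlt | hge
      · interval_cases h : i.val
        · -- i = 0, j = 1 : a ≠ z
          have hj1 : j.val = 1 := by omega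
          simp [h, hj1, Ne.symm hza]
        · -- i = 1, j = 2 : z ≠ c(v2)
          have hj2 : j.val = 2 := by omega
          simp only [h, hj2]
          norm_num
          rcases Nat.lt_or_ge 2 (t + 1) with h2t | h2t
          · exact Ne.symm ((hmid 2 le_rfl (by omega)).2.2.2 rfl)
          · -- t = 1, so vertex 2 is p''
            have ht1 : t = 1 := by omega
            have h0 : t + 1 - 2 = 0 := by omega
            rw [h0, hg0]
            exact Ne.symm (hxz ht1)
      · have h1 : ¬ (i.val = 0) := by omega
        have h2 : ¬ (i.val = 1) := by omega
        have hj1 : ¬ (j.val = 0) := by omega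
        have hj2 : ¬ (j.val = 1) := by omega
        rw [if_neg h1, if_neg h2, if_neg hj1, if_neg hj2]
        have hit : i.val ≤ t := by omega
        have := (hmid i.val hge hit).2.2.1
        have hje : t + 1 - j.val = t - i.val := by omega
        rw [hje]
        exact this
    intro v w hadj
    match v, w with
    | none, none => exact absurd hadj (by simp [bwAdj])
    | none, some i => exact Ne.symm (hub i)
    | some i, none => exact hub i
    | some i, some j =>
      rcases hadj with h | h
      · exact hseq i j h
      · exact Ne.symm (hseq j i h)
  · -- value at p
    rw [hcval]; simp

/-- Theorem 2.4(3), first part: if `|V(G)| ≥ 4` (i.e. `t ≥ 1`), `x` is the vertex at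
distance two from `p` on the path `G - p'` (the path vertex of index `2`, which is `u₂`
if `t ≥ 2` and `p''` if `t = 1`), and `a ∈ L(p)` satisfies `L(u₁) \ {a} ⊄ L(x)`, then
`a` is almost `(P, G)`-universal: for every `b ∈ L(p') \ {a}`,
`|Λ_G(a, b, •)| ≥ |L(p'')| - 1`. -/
theorem bwheel_almost_universal (t : ℕ) (ht : 1 ≤ t) (L : BWVert t → Finset ℕ)
    (hL : ∀ v : BWVert t, v ≠ some 0 → v ≠ none → 3 ≤ (L v).card)
    (a : ℕ) (ha : a ∈ L (some 0))
    (hx : ¬ (L (some (1 : Fin (t + 2))) \ {a} ⊆ L (some (⟨2, by omega⟩ : Fin (t + 2))))) :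
    ∀ b ∈ L (none : BWVert t), b ≠ a →
      (L (some (Fin.last (t + 1)))).card - 1 ≤ (Lambda t L a b).ncard := by
  classical
  intro b hb hba
  have hab : a ≠ b := Ne.symm hba
  -- translate vertex names
  have he1 : (some (1 : Fin (t + 2)) : BWVert t) = some (bwIdx t 1) := by
    congr 1
  have he2 : (some (⟨2, by omega⟩ : Fin (t + 2)) : BWVert t) = some (bwIdx t 2) := by
    congr 1; apply Fin.ext
    rw [bwIdx_val t 2 (by omega)]
  rw [he1, he2] at hx
  obtain ⟨d, hd, hdn⟩ := Finset.not_subset.mp hx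
  rw [Finset.mem_sdiff, Finset.mem_singleton] at hd
  obtain ⟨hdu, hda⟩ := hd
  -- obtain z with the key property
  obtain ⟨z, hz, hza, hzb, key⟩ :
      ∃ z, z ∈ L (some (bwIdx t 1)) ∧ z ≠ a ∧ z ≠ b ∧
        (z ∉ L (some (bwIdx t 2)) ∨ b ∉ L (some (bwIdx t 2))) := by
    by_cases hdb : d = b
    · -- b itself is missing from L(v₂); pick any admissible z
      have hcard : 3 ≤ (L (some (bwIdx t 1))).card := by
        apply hL
        · intro h
          have := congrArg (fun o => Option.getD (Option.map Fin.val o) 7) h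
          simp [bwIdx_val t 1 (by omega)] at this
        · simp
      have h1 : 1 ≤ ((((L (some (bwIdx t 1))).erase a).erase b)).card := by
        have e1 := Finset.pred_card_le_card_erase
          (s := L (some (bwIdx t 1))) (a := a)
        have e2 := Finset.pred_card_le_card_erase
          (s := (L (some (bwIdx t 1))).erase a) (a := b)
        omega
      obtain ⟨z, hzmem⟩ := Finset.card_pos.mp h1
      rw [Finset.mem_erase, Finset.mem_erase] at hzmem
      exact ⟨z, hzmem.2.2, hzmem.2.1, hzmem.1, Or.inr (hdb ▸ hdn)⟩
    · exact ⟨d, hdu, hda, hdb, Or.inl hdn⟩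
  -- the target set T
  set P'' : BWVert t := some (Fin.last (t + 1)) with hP''
  have hT : ∃ T : Finset ℕ, (L P'').card - 1 ≤ T.card ∧
      ∀ x ∈ T, x ∈ L P'' ∧ x ≠ b ∧ (t = 1 → x ≠ z) := by
    by_cases ht1 : t = 1
    · -- p'' = v₂
      have hv2 : (some (bwIdx t 2) : BWVert t) = P'' := by
        rw [hP'']; congr 1; apply Fin.ext
        rw [bwIdx_val t 2 (by omega)]
        simp [Fin.last, ht1]
      rw [hv2] at key
      refine ⟨L P'' \ {b, z}, ?_, ?_⟩
      · rcases key with hk | hk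
        · have : L P'' \ {b, z} = (L P'').erase b := by
            ext c
            simp only [Finset.mem_sdiff, Finset.mem_insert, Finset.mem_singleton,
              Finset.mem_erase, not_or]
            constructor
            · rintro ⟨hc, hb', hz'⟩; exact ⟨hb', hc⟩
            · rintro ⟨hb', hc⟩; exact ⟨hc, hb', fun h => hk (h ▸ hc)⟩
          rw [this]
          exact Finset.pred_card_le_card_erase
        · have : L P'' \ {b, z} = (L P'').erase z := by
            ext c
            simp only [Finset.mem_sdiff, Finset.mem_insert, Finset.mem_singleton,
              Finset.mem_erase, not_or]
            constructor
            · rintro ⟨hc, hb', hz'⟩; exact ⟨hz', hc⟩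
            · rintro ⟨hz', hc⟩; exact ⟨hc, fun h => hk (h ▸ hc), hz'⟩
          rw [this]
          exact Finset.pred_card_le_card_erase
      · intro x hxT
        rw [Finset.mem_sdiff, Finset.mem_insert, Finset.mem_singleton] at hxT
        push_neg at hxT
        exact ⟨hxT.1, hxT.2.1, fun _ => hxT.2.2⟩
    · refine ⟨(L P'').erase b, Finset.pred_card_le_card_erase, ?_⟩
      intro x hxT
      rw [Finset.mem_erase] at hxT
      exact ⟨hxT.2, hxT.1, fun h => absurd h ht1⟩
  obtain ⟨T, hTcard, hTprop⟩ := hT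
  have hsub : (↑T : Set ℕ) ⊆ Lambda t L a b := by
    intro x hxT
    rw [Finset.mem_coe] at hxT
    obtain ⟨hx1, hx2, hx3⟩ := hTprop x hxT
    exact bw_exists_coloring t ht L hL a b z x ha hb hz hza hzb hab key hx1 hx2 hx3
  have hΛsub : Lambda t L a b ⊆ (↑(L P'') : Set ℕ) := by
    rintro x ⟨c, ⟨hmem, _⟩, _, _, hcx⟩
    exact Finset.mem_coe.mpr (hcx ▸ hmem P'')
  have hfin : (Lambda t L a b).Finite :=
    Set.Finite.subset (L P'').finite_toSet hΛsub
  calc (L P'').card - 1 ≤ T.card := hTcard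
    _ = (↑T : Set ℕ).ncard := (Set.ncard_coe_finset T).symm
    _ ≤ (Lambda t L a b).ncard := Set.ncard_le_ncard hsub hfin
end

section
/- Let G be a broken wheel with principal path P = p p' p'' and let L be a list-assignment for G with |L(v)| ≥ 3 for every vertex v ∈ V(G) \ {p, p'}. Suppose |V(G)| ≥ 5, write G − p' = p u₁ … u_t p'' (so t ≥ 2), let x = u₂ be the unique vertex at distance two from p on the path G − p', and let a ∈ L(p) be a color such that L(u₁) \ {a} is not contained in L(x). Then a is (P, G)-universal, i.e., for every b ∈ L(p') \ {a} and every c ∈ L(p'') \ {b}, there is an L-coloring of G using a, b, c on p, p', p'' respectively. -/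
open Fin.NatCast

/- ### Auxiliary definitions for the greedy backward coloring -/

/-- Pick a color for the path vertex `u_k` (for `2 ≤ k ≤ t`) given the color `prev` of
the next vertex `u_{k+1}`; for `k = 1` we always use the reserved color `e`. -/
noncomputable def bwPick (t : ℕ) (L : BWVert t → Finset ℕ) (b e : ℕ) (k prev : ℕ) : ℕ :=
  if k = 1 then e
  else if h : (L (some ((k : ℕ) : Fin (t + 2))) \ {b, prev, if k = 2 then e else b}).Nonempty
  then h.choose else 0

/-- `bwG t L b e cc j` is the color of the path vertex with index `t + 1 - j`. -/
noncomputable def bwG (t : ℕ) (L : BWVert t → Finset ℕ) (b e cc : ℕ) : ℕ → ℕ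
  | 0 => cc
  | j + 1 => bwPick t L b e (t - j) (bwG t L b e cc j)

/-- The color of the path vertex with index `k`. -/
noncomputable def bwCol (t : ℕ) (L : BWVert t → Finset ℕ) (a b e cc : ℕ) (k : ℕ) : ℕ :=
  if k = 0 then a else bwG t L b e cc (t + 1 - k)

lemma bwCol_rec (t : ℕ) (L : BWVert t → Finset ℕ) (a b e cc : ℕ) {k : ℕ}
    (h1 : 1 ≤ k) (h2 : k ≤ t) :
    bwCol t L a b e cc k = bwPick t L b e k (bwCol t L a b e cc (k + 1)) := by
  unfold bwCol
  rw [if_neg (by omega), if_neg (by omega)]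
  have h3 : t + 1 - k = (t - k) + 1 := by omega
  rw [h3]
  show bwPick t L b e (t - (t - k)) (bwG t L b e cc (t - k)) = _
  have h4 : t - (t - k) = k := by omega
  have h5 : t + 1 - (k + 1) = t - k := by omega
  rw [h4, h5]

lemma bwCol_zero (t : ℕ) (L : BWVert t → Finset ℕ) (a b e cc : ℕ) :
    bwCol t L a b e cc 0 = a := if_pos rfl

lemma bwCol_top (t : ℕ) (L : BWVert t → Finset ℕ) (a b e cc : ℕ) :
    bwCol t L a b e cc (t + 1) = cc := by
  unfold bwCol
  rw [if_neg (by omega), Nat.sub_self]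
  rfl

lemma sdiff_nonempty_of_card (L F : Finset ℕ) (h3 : 3 ≤ L.card) (hF : F.card ≤ 2) :
    (L \ F).Nonempty := by
  rw [← Finset.card_pos]
  have := Finset.card_le_card_sdiff_add_card (s := L) (t := F)
  omega

/-- Theorem 2.4(3), second part: if `|V(G)| ≥ 5` (i.e. `t ≥ 2`), `x = u₂` is the vertex
at distance two from `p` on the path `G - p'`, and `a ∈ L(p)` satisfies
`L(u₁) \ {a} ⊄ L(x)`, then `a` is `(P, G)`-universal: for every `b ∈ L(p') \ {a}` and
every `c ∈ L(p'') \ {b}`, there is an `L`-coloring of `G` using `a, b, c` on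
`p, p', p''` respectively. -/
theorem bwheel_universal (t : ℕ) (ht : 2 ≤ t) (L : BWVert t → Finset ℕ)
    (hL : ∀ v : BWVert t, v ≠ some 0 → v ≠ none → 3 ≤ (L v).card)
    (a : ℕ) (ha : a ∈ L (some 0))
    (hx : ¬ (L (some (1 : Fin (t + 2))) \ {a} ⊆ L (some (⟨2, by omega⟩ : Fin (t + 2))))) :
    ∀ b ∈ L (none : BWVert t), b ≠ a →
      ∀ cc ∈ L (some (Fin.last (t + 1))), cc ≠ b → cc ∈ Lambda t L a b := by
  classical
  intro b hb hba cc hcc hccb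
  obtain ⟨d, hd, hdx⟩ := Finset.not_subset.mp hx
  rw [Finset.mem_sdiff, Finset.mem_singleton] at hd
  obtain ⟨hd1, hda⟩ := hd
  have h1ne0 : (1 : Fin (t + 2)) ≠ 0 := by
    intro h
    have := congrArg Fin.val h
    simp [Fin.val_one] at this
  -- choose the reserved color `e` for `u₁`
  obtain ⟨e, he1, hea, heb, hde⟩ :
      ∃ e, e ∈ L (some (1 : Fin (t + 2))) ∧ e ≠ a ∧ e ≠ b ∧ (d = e ∨ d = b) := by
    by_cases hdb : d = b
    · have hc3 : 3 ≤ (L (some (1 : Fin (t + 2)))).card := by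
        apply hL
        · simpa using h1ne0
        · simp
      have hcard2 : ({a, b} : Finset ℕ).card ≤ 2 :=
        le_trans (Finset.card_insert_le _ _) (by simp)
      obtain ⟨e, he⟩ := sdiff_nonempty_of_card _ _ hc3 hcard2
      rw [Finset.mem_sdiff, Finset.mem_insert, Finset.mem_singleton] at he
      exact ⟨e, he.1, fun h => he.2 (Or.inl h), fun h => he.2 (Or.inr h), Or.inr hdb⟩
    · exact ⟨d, hd1, hda, hdb, Or.inl rfl⟩
  -- properties of picked colors
  have pick_spec : ∀ k prev, 2 ≤ k → k ≤ t →
      bwPick t L b e k prev ∈ L (some ((k : ℕ) : Fin (t + 2))) ∧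
      bwPick t L b e k prev ∉ ({b, prev, if k = 2 then e else b} : Finset ℕ) := by
    intro k prev hk2 hkt
    have hk1 : k ≠ 1 := by omega
    have hkfin : k < t + 2 := by omega
    have hval : ((k : ℕ) : Fin (t + 2)).val = k := Fin.val_cast_of_lt hkfin
    have hLk : 3 ≤ (L (some ((k : ℕ) : Fin (t + 2)))).card := by
      apply hL
      · intro hcontra
        have := congrArg (fun v : BWVert t => v.map Fin.val) hcontra
        simp [hval] at this
        omega
      · simp
    have hne : (L (some ((k : ℕ) : Fin (t + 2))) \
        {b, prev, if k = 2 then e else b}).Nonempty := by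
      by_cases hk : k = 2
      · subst hk
        rw [show (if (2:ℕ) = 2 then e else b) = e from if_pos rfl]
        have hL2 : L (some ((2 : ℕ) : Fin (t + 2))) =
            L (some (⟨2, by omega⟩ : Fin (t + 2))) := by
          congr 2
          exact Fin.ext hval
        rw [hL2]
        have hdL : d ∉ L (some (⟨2, by omega⟩ : Fin (t + 2))) := hdx
        have hsd : L (some (⟨2, by omega⟩ : Fin (t + 2))) \ ({b, prev, e} : Finset ℕ) =
            L (some (⟨2, by omega⟩ : Fin (t + 2))) \ (({b, prev, e} : Finset ℕ).erase d) := by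
          ext x
          simp only [Finset.mem_sdiff, Finset.mem_erase]
          constructor
          · rintro ⟨hxL, hxF⟩
            exact ⟨hxL, fun h => hxF h.2⟩
          · rintro ⟨hxL, hxF⟩
            refine ⟨hxL, fun h => hxF ⟨?_, h⟩⟩
            rintro rfl
            exact hdL hxL
        rw [hsd]
        apply sdiff_nonempty_of_card _ _ (by rw [← hL2]; exact hLk)
        have hdF : d ∈ ({b, prev, e} : Finset ℕ) := by
          rcases hde with h | h <;> subst h <;> simp
        have hcF : ({b, prev, e} : Finset ℕ).card ≤ 3 :=
          le_trans (Finset.card_insert_le _ _)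
            (by exact Nat.add_le_add_right (le_trans (Finset.card_insert_le _ _) (by simp)) 1)
        have := Finset.card_erase_of_mem hdF
        omega
      · have heq : ({b, prev, if k = 2 then e else b} : Finset ℕ) = {b, prev} := by
          rw [if_neg hk]
          ext x
          simp only [Finset.mem_insert, Finset.mem_singleton]
          tauto
        rw [heq]
        apply sdiff_nonempty_of_card _ _ hLk
        exact le_trans (Finset.card_insert_le _ _) (by simp)
    unfold bwPick
    rw [if_neg hk1, dif_pos hne]
    have := hne.choose_spec
    rw [Finset.mem_sdiff] at this
    exact this
  set col := bwCol t L a b e cc with hcol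
  have col1 : col 1 = e := by
    rw [hcol, bwCol_rec t L a b e cc (le_refl 1) (by omega)]
    unfold bwPick
    rw [if_pos rfl]
  have colk : ∀ k, 2 ≤ k → k ≤ t →
      col k ∈ L (some ((k : ℕ) : Fin (t + 2))) ∧ col k ≠ b ∧ col k ≠ col (k + 1) ∧
        (k = 2 → col k ≠ e) := by
    intro k hk2 hkt
    have hrec := bwCol_rec t L a b e cc (by omega : 1 ≤ k) hkt
    rw [hcol] at *
    rw [hrec]
    obtain ⟨hmem, hnot⟩ := pick_spec k (bwCol t L a b e cc (k + 1)) hk2 hkt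
    simp only [Finset.mem_insert, Finset.mem_singleton] at hnot
    push_neg at hnot
    refine ⟨hmem, hnot.1, hnot.2.1, ?_⟩
    intro h2
    subst h2
    have := hnot.2.2
    rwa [if_pos rfl] at this
  -- consecutive vertices get different colors
  have hcons : ∀ k, k + 1 ≤ t + 1 → col k ≠ col (k + 1) := by
    intro k hk
    by_cases h0 : k = 0
    · subst h0
      rw [hcol, bwCol_zero]
      rw [show bwCol t L a b e cc 1 = e from col1]
      exact fun h => hea h.symm
    by_cases h1 : k = 1
    · subst h1
      rw [col1]
      have := (colk 2 (le_refl 2) ht).2.2.2 rfl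
      exact fun h => this h.symm
    exact (colk k (by omega) (by omega)).2.2.1
  -- color of each path vertex is not b
  have hnotb : ∀ k, k ≤ t + 1 → col k ≠ b := by
    intro k hk
    by_cases h0 : k = 0
    · subst h0; rw [hcol, bwCol_zero]; exact fun h => hba h.symm
    by_cases h1 : k = 1
    · subst h1; rw [col1]; exact heb
    by_cases htop : k = t + 1
    · subst htop; rw [hcol, bwCol_top]; exact hccb
    exact (colk k (by omega) (by omega)).2.1
  -- membership of path-vertex colors
  have hmemk : ∀ i : Fin (t + 2), col i.val ∈ L (some i) := by
    intro i
    have hi := i.isLt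
    by_cases h0 : i.val = 0
    · have : i = 0 := Fin.ext (by simpa using h0)
      subst this
      rw [hcol]
      simpa [bwCol_zero] using ha
    by_cases h1 : i.val = 1
    · have : i = 1 := Fin.ext (by simpa [Fin.val_one] using h1)
      subst this
      simp only [Fin.val_one, col1]
      exact he1
    by_cases htop : i.val = t + 1
    · have : i = Fin.last (t + 1) := Fin.ext (by simpa [Fin.val_last] using htop)
      subst this
      rw [Fin.val_last, hcol, bwCol_top]
      exact hcc
    · have hmem := (colk i.val (by omega) (by omega)).1
      rwa [Fin.cast_val_eq_self] at hmem
  -- assemble the coloring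
  refine ⟨fun v => v.elim b (fun i => col i.val), ⟨?_, ?_⟩, ?_, rfl, ?_⟩
  · intro v
    match v with
    | none => exact hb
    | some i => exact hmemk i
  · intro v w hadj
    match v, w with
    | none, none => exact absurd hadj id
    | none, some i =>
      exact fun h => hnotb i.val (by omega) h.symm
    | some i, none =>
      exact hnotb i.val (by omega)
    | some i, some j =>
      rcases hadj with h | h
      · show col i.val ≠ col j.val
        rw [← h]
        exact hcons i.val (by omega)
      · show col i.val ≠ col j.val
        rw [← h]
        exact fun hh => hcons j.val (by omega) hh.symm
  · show col (0 : Fin (t + 2)).val = a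
    simp [hcol, bwCol_zero]
  · show col (Fin.last (t + 1)).val = cc
    rw [Fin.val_last, hcol, bwCol_top]
end
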